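/- Let p₁ < p₂, ρ > 1, μ ∈ (0,1]. Let I be an open interval containing [p₁,p₂], p₀ ∈ [p₁,p₂], and ψ ∈ C²(I) with ψ'(p) = |p−p₀|^{ρ−1} ψ̃(p) where |ψ̃| is continuous and nonvanishing on I, and ψ' monotone on I ∩ (−∞,p₀] and I ∩ [p₀,∞). Let U(p) = (p−p₁)^{μ−1} ũ(p) with ũ continuous on [p₁,p₂], differentiable on (p₁,p₂), ũ' ∈ L¹(p₁,p₂). Then for all ω > 0, |∫_{p₁}^{p₂} U(p) e^{iωψ(p)} dp| ≤ C ω^{−μ/ρ}, where C = (3/μ)‖ũ‖_{L^∞} + (8‖ũ‖_{L^∞} + 2‖ũ'‖_{L¹}) (min_{[p₁,p₂]} |ψ̃|)^{−1}, and C does not depend on the position of p₀ in [p₁,p₂]. -/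

import Mathlib

open Set MeasureTheory intervalIntegral

lemma vdc_deriv_nonneg_of_monotoneOn {f : ℝ → ℝ} {c a b x : ℝ}
    (hm : MonotoneOn f (Set.Icc a b)) (hx : x ∈ Set.Ioo a b) (hd : HasDerivAt f c x) :
    0 ≤ c := by
  have h1 : HasDerivWithinAt f c (Set.Ioi x) x := hd.hasDerivWithinAt
  rw [hasDerivWithinAt_iff_tendsto_slope' (by simp : x ∉ Set.Ioi x)] at h1
  refine ge_of_tendsto h1 ?_
  filter_upwards [Ioo_mem_nhdsGT_of_mem (Set.mem_Ico.2 ⟨le_rfl, hx.2⟩)] with y hy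
  rw [slope_def_field]
  apply div_nonneg
  · have := hm ⟨hx.1.le, hx.2.le⟩ ⟨(hx.1.trans hy.1).le, hy.2.le⟩ hy.1.le
    linarith
  · linarith [hy.1]

lemma vdc_deriv_nonpos_of_antitoneOn {f : ℝ → ℝ} {c a b x : ℝ}
    (hm : AntitoneOn f (Set.Icc a b)) (hx : x ∈ Set.Ioo a b) (hd : HasDerivAt f c x) :
    c ≤ 0 := by
  have := vdc_deriv_nonneg_of_monotoneOn (f := fun y => -f y) (c := -c)
    (fun u hu v hv huv => neg_le_neg (hm hu hv huv)) hx hd.neg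
  linarith

lemma vdc_sign_dichotomy {g : ℝ → ℝ} {a b lam : ℝ} (hab : a ≤ b) (hlam : 0 < lam)
    (hc : ContinuousOn g (Set.Icc a b)) (h : ∀ p ∈ Set.Icc a b, lam ≤ |g p|) :
    (∀ p ∈ Set.Icc a b, lam ≤ g p) ∨ (∀ p ∈ Set.Icc a b, g p ≤ -lam) := by
  have habs : ∀ p ∈ Set.Icc a b, lam ≤ g p ∨ g p ≤ -lam := by
    intro p hp
    rcases le_abs.mp (h p hp) with h'|h'
    · exact Or.inl h'
    · exact Or.inr (by linarith)
  have hmem : a ∈ Set.Icc a b := ⟨le_rfl, hab⟩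
  rcases habs a hmem with ha | ha
  · left
    intro p hp
    rcases habs p hp with h'|h'
    · exact h'
    · exfalso
      have hsub : Set.Icc a p ⊆ Set.Icc a b := Set.Icc_subset_Icc le_rfl hp.2
      have := intermediate_value_Icc' hp.1 (hc.mono hsub)
        (show (0:ℝ) ∈ Set.Icc (g p) (g a) by constructor <;> linarith)
      obtain ⟨c, hc1, hc2⟩ := this
      have := h c (hsub hc1)
      rw [hc2] at this
      simp at this
      linarith
  · right
    intro p hp
    rcases habs p hp with h'|h'
    · exfalso
      have hsub : Set.Icc a p ⊆ Set.Icc a b := Set.Icc_subset_Icc le_rfl hp.2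
      have := intermediate_value_Icc hp.1 (hc.mono hsub)
        (show (0:ℝ) ∈ Set.Icc (g a) (g p) by constructor <;> linarith)
      obtain ⟨c, hc1, hc2⟩ := this
      have := h c (hsub hc1)
      rw [hc2] at this
      simp at this
      linarith
    · exact h'


lemma vdc_ibp_bound (a b ω lam : ℝ) (hab : a ≤ b) (hω : 0 < ω) (hlam : 0 < lam)
    (ψ ψ' ψ'' : ℝ → ℝ)
    (hψd : ∀ p ∈ Set.Icc a b, HasDerivAt ψ (ψ' p) p)
    (hψ'd : ∀ p ∈ Set.Icc a b, HasDerivAt ψ' (ψ'' p) p)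
    (hψ''c : ContinuousOn ψ'' (Set.Icc a b))
    (hsign : (∀ p ∈ Set.Icc a b, lam ≤ ψ' p) ∨ ∀ p ∈ Set.Icc a b, ψ' p ≤ -lam)
    (hψ''sign : (∀ p ∈ Set.Ioo a b, 0 ≤ ψ'' p) ∨ ∀ p ∈ Set.Ioo a b, ψ'' p ≤ 0)
    (V V' : ℝ → ℂ)
    (hVc : ContinuousOn V (Set.Icc a b))
    (hVd : ∀ p ∈ Set.Ioo a b, HasDerivAt V (V' p) p)
    (hV'int : IntervalIntegrable V' MeasureTheory.volume a b)
    (MV B : ℝ)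
    (hMV : ∀ p ∈ Set.Icc a b, ‖V p‖ ≤ MV)
    (hB : (∫ p in a..b, ‖V' p‖) ≤ B) :
    ‖∫ p in a..b, V p * Complex.exp (Complex.I * ω * ψ p)‖ ≤ (3 * MV + B) / (ω * lam) := by
  have hMV0 : 0 ≤ MV := le_trans (norm_nonneg _) (hMV a ⟨le_rfl, hab⟩)
  have hωlam : 0 < ω * lam := mul_pos hω hlam
  set c : ℂ := Complex.I * (ω : ℂ) with hc
  have hc0 : c ≠ 0 := by
    simp [hc, Complex.I_ne_zero, Complex.ofReal_ne_zero, hω.ne']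
  have hnormc : ‖c‖ = ω := by
    simp [hc, abs_of_pos hω]
  -- |ψ'| ≥ lam, ψ' ≠ 0
  have hψ'lam : ∀ p ∈ Set.Icc a b, lam ≤ |ψ' p| := by
    intro p hp
    rcases hsign with h|h
    · exact le_trans (h p hp) (le_abs_self _)
    · exact le_trans (by linarith [h p hp] : lam ≤ -ψ' p) (neg_le_abs _)
  have hψ'ne : ∀ p ∈ Set.Icc a b, ψ' p ≠ 0 := fun p hp => by
    intro h0
    have := hψ'lam p hp
    rw [h0] at this
    simp at this
    linarith
  have hψ'c : ContinuousOn ψ' (Set.Icc a b) :=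
    fun p hp => ((hψ'd p hp).continuousAt).continuousWithinAt
  have hψc : ContinuousOn ψ (Set.Icc a b) :=
    fun p hp => ((hψd p hp).continuousAt).continuousWithinAt
  set E : ℝ → ℂ := fun p => Complex.exp (c * ψ p) with hE
  have hE1 : ∀ p, ‖E p‖ = 1 := by
    intro p
    have : c * ψ p = ((ω * ψ p : ℝ) : ℂ) * Complex.I := by push_cast [hc]; ring
    rw [hE]; simp only []; rw [this, Complex.norm_exp_ofReal_mul_I]
  set D : ℝ → ℂ := fun p => c * (ψ' p : ℂ) with hD
  have hDne : ∀ p ∈ Set.Icc a b, D p ≠ 0 := fun p hp =>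
    mul_ne_zero hc0 (Complex.ofReal_ne_zero.2 (hψ'ne p hp))
  have hnormD : ∀ p, ‖D p‖ = ω * |ψ' p| := fun p => by
    rw [hD]; simp only []; rw [norm_mul, hnormc, Complex.norm_real, Real.norm_eq_abs]
  have hnormDlam : ∀ p ∈ Set.Icc a b, ω * lam ≤ ‖D p‖ := fun p hp => by
    rw [hnormD]; exact mul_le_mul_of_nonneg_left (hψ'lam p hp) hω.le
  have hDd : ∀ p ∈ Set.Icc a b, HasDerivAt D (c * (ψ'' p : ℂ)) p := fun p hp =>
    ((hψ'd p hp).ofReal_comp).const_mul c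
  have hEd : ∀ p ∈ Set.Icc a b, HasDerivAt E (E p * D p) p := fun p hp =>
    ((hψd p hp).ofReal_comp.const_mul c).cexp
  have hEc : ContinuousOn E (Set.Icc a b) :=
    fun p hp => ((hEd p hp).continuousAt).continuousWithinAt
  have hDc : ContinuousOn D (Set.Icc a b) :=
    fun p hp => ((hDd p hp).continuousAt).continuousWithinAt
  set G : ℝ → ℂ := fun p => V p * E p / D p with hG
  set G' : ℝ → ℂ := fun p =>
    ((V' p * E p + V p * (E p * D p)) * D p - V p * E p * (c * (ψ'' p : ℂ))) / D p ^ 2 with hG'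
  have hGd : ∀ p ∈ Set.Ioo a b, HasDerivAt G (G' p) p := by
    intro p hp
    have hp' : p ∈ Set.Icc a b := Set.mem_Icc_of_Ioo hp
    exact ((hVd p hp).mul (hEd p hp')).div (hDd p hp') (hDne p hp')
  have hGc : ContinuousOn G (Set.Icc a b) := (hVc.mul hEc).div hDc hDne
  set T1 : ℝ → ℂ := fun p => V' p * (E p / D p) with hT1
  set T3 : ℝ → ℂ := fun p => V p * E p * (ψ'' p : ℂ) / (c * ((ψ' p : ℂ)) ^ 2) with hT3
  have hkey : ∀ p ∈ Set.Icc a b, V p * E p = G' p - T1 p + T3 p := by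
    intro p hp
    have h1 : (ψ' p : ℂ) ≠ 0 := Complex.ofReal_ne_zero.2 (hψ'ne p hp)
    rw [hG', hT1, hT3, hD]
    simp only []
    field_simp
    ring
  -- integrability
  have huIcc : Set.uIcc a b = Set.Icc a b := Set.uIcc_of_le hab
  have hVEc : ContinuousOn (fun p => V p * E p) (Set.Icc a b) := hVc.mul hEc
  have hVEi : IntervalIntegrable (fun p => V p * E p) volume a b := by
    apply ContinuousOn.intervalIntegrable; rwa [huIcc]
  have hT1i : IntervalIntegrable T1 volume a b := by
    apply hV'int.mul_continuousOn
    rw [huIcc]; exact hEc.div hDc hDne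
  have hT3i : IntervalIntegrable T3 volume a b := by
    apply ContinuousOn.intervalIntegrable
    rw [huIcc]
    exact ((hVc.mul hEc).mul (Complex.continuous_ofReal.comp_continuousOn hψ''c)).div
      (continuousOn_const.mul ((Complex.continuous_ofReal.comp_continuousOn hψ'c).pow 2))
      (fun p hp => mul_ne_zero hc0 (pow_ne_zero 2 (Complex.ofReal_ne_zero.2 (hψ'ne p hp))))
  have hG'i : IntervalIntegrable G' volume a b := by
    have : IntervalIntegrable (fun p => V p * E p + T1 p - T3 p) volume a b :=
      (hVEi.add hT1i).sub hT3i
    apply this.congr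
    intro p hp
    have hp' : p ∈ Set.Icc a b := by
      rw [Set.uIoc_of_le hab] at hp; exact Set.mem_Icc_of_Ioc hp
    have := hkey p hp'
    simp only [] at this ⊢
    rw [this]; ring
  have hFTC : (∫ p in a..b, G' p) = G b - G a :=
    integral_eq_sub_of_hasDerivAt_of_le hab hGc hGd hG'i
  have hsplit : (∫ p in a..b, V p * E p) =
      (G b - G a) - (∫ p in a..b, T1 p) + ∫ p in a..b, T3 p := by
    rw [← hFTC, ← intervalIntegral.integral_sub hG'i hT1i,
      ← intervalIntegral.integral_add (hG'i.sub hT1i) hT3i]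
    apply intervalIntegral.integral_congr
    intro p hp
    rw [huIcc] at hp
    exact hkey p hp
  -- bounds
  have hGb : ∀ p ∈ Set.Icc a b, ‖G p‖ ≤ MV / (ω * lam) := by
    intro p hp
    rw [hG]; simp only []
    rw [norm_div, norm_mul, hE1, mul_one]
    exact div_le_div₀ (by exact hMV0) (hMV p hp) hωlam (hnormDlam p hp)
  have hT1b : ‖∫ p in a..b, T1 p‖ ≤ B / (ω * lam) := by
    calc ‖∫ p in a..b, T1 p‖ ≤ ∫ p in a..b, ‖T1 p‖ :=
          intervalIntegral.norm_integral_le_integral_norm hab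
      _ ≤ ∫ p in a..b, ‖V' p‖ * (ω * lam)⁻¹ := by
          apply intervalIntegral.integral_mono_on hab hT1i.norm (hV'int.norm.mul_const _)
          intro p hp
          rw [hT1]; simp only []
          rw [norm_mul, norm_div, hE1]
          apply mul_le_mul_of_nonneg_left _ (norm_nonneg _)
          rw [← one_div]
          exact one_div_le_one_div_of_le hωlam (hnormDlam p hp)
      _ ≤ B / (ω * lam) := by
          rw [intervalIntegral.integral_mul_const, div_eq_mul_inv]
          exact mul_le_mul_of_nonneg_right hB (inv_nonneg.2 hωlam.le)
  -- the ψ'' integral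
  have hinvd : ∀ p ∈ Set.Icc a b, HasDerivAt (fun q => -(ψ' q)⁻¹) (ψ'' p / (ψ' p) ^ 2) p := by
    intro p hp
    have h := ((hψ'd p hp).inv (hψ'ne p hp)).neg
    rw [show ψ'' p / ψ' p ^ 2 = -(-ψ'' p / ψ' p ^ 2) by ring]
    exact h
  have hrat_c : ContinuousOn (fun p => ψ'' p / (ψ' p) ^ 2) (Set.Icc a b) :=
    hψ''c.div (hψ'c.pow 2) (fun p hp => pow_ne_zero 2 (hψ'ne p hp))
  have hrat_i : IntervalIntegrable (fun p => ψ'' p / (ψ' p) ^ 2) volume a b := by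
    apply ContinuousOn.intervalIntegrable; rwa [huIcc]
  have habs_i : IntervalIntegrable (fun p => |ψ'' p| / (ψ' p) ^ 2) volume a b := by
    apply ContinuousOn.intervalIntegrable
    rw [huIcc]
    exact (hψ''c.abs).div (hψ'c.pow 2) (fun p hp => pow_ne_zero 2 (hψ'ne p hp))
  have hS : (∫ p in a..b, ψ'' p / (ψ' p) ^ 2) = (ψ' a)⁻¹ - (ψ' b)⁻¹ := by
    have := integral_eq_sub_of_hasDerivAt_of_le hab
      (((hψ'c.inv₀ hψ'ne).neg)) (fun p hp => hinvd p (Set.mem_Icc_of_Ioo hp)) hrat_i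
    rw [this]; simp only [Pi.neg_apply, Pi.inv_apply]; ring
  have hSb : |(ψ' a)⁻¹ - (ψ' b)⁻¹| ≤ lam⁻¹ := by
    have hamem : a ∈ Set.Icc a b := ⟨le_rfl, hab⟩
    have hbmem : b ∈ Set.Icc a b := ⟨hab, le_rfl⟩
    rcases hsign with h|h
    · have ha := h a hamem; have hb := h b hbmem
      have h1 : (ψ' a)⁻¹ ≤ lam⁻¹ := by
        rw [← one_div, ← one_div]; exact one_div_le_one_div_of_le hlam ha
      have h2 : (ψ' b)⁻¹ ≤ lam⁻¹ := by
        rw [← one_div, ← one_div]; exact one_div_le_one_div_of_le hlam hb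
      have h3 : 0 < (ψ' a)⁻¹ := inv_pos.2 (lt_of_lt_of_le hlam ha)
      have h4 : 0 < (ψ' b)⁻¹ := inv_pos.2 (lt_of_lt_of_le hlam hb)
      rw [abs_sub_le_iff]; constructor <;> linarith
    · have ha := h a hamem; have hb := h b hbmem
      have h1' : -(ψ' a)⁻¹ ≤ lam⁻¹ ∧ 0 < -(ψ' a)⁻¹ := by
        constructor
        · rw [← inv_neg, ← one_div, ← one_div]
          exact one_div_le_one_div_of_le hlam (by linarith)
        · rw [← inv_neg]; exact inv_pos.2 (by linarith)
      have h2' : -(ψ' b)⁻¹ ≤ lam⁻¹ ∧ 0 < -(ψ' b)⁻¹ := by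
        constructor
        · rw [← inv_neg, ← one_div, ← one_div]
          exact one_div_le_one_div_of_le hlam (by linarith)
        · rw [← inv_neg]; exact inv_pos.2 (by linarith)
      rw [abs_sub_le_iff]; constructor <;> linarith [h1'.1, h1'.2, h2'.1, h2'.2]
  have hvar : (∫ p in a..b, |ψ'' p| / (ψ' p) ^ 2) ≤ lam⁻¹ := by
    have hbae : ∀ᵐ (x : ℝ) ∂(volume : Measure ℝ), x ∈ Set.uIoc a b → x ∈ Set.Ioo a b := by
      have h1 : (volume : Measure ℝ) {b} = 0 := measure_singleton b
      rw [MeasureTheory.ae_iff]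
      refine measure_mono_null (fun x hx => ?_) h1
      simp only [Set.mem_setOf_eq, not_forall] at hx
      obtain ⟨hx1, hx2⟩ := hx
      rw [Set.uIoc_of_le hab] at hx1
      simp only [Set.mem_singleton_iff]
      by_contra hne
      exact hx2 ⟨hx1.1, lt_of_le_of_ne hx1.2 hne⟩
    rcases hψ''sign with h|h
    · have : (∫ p in a..b, |ψ'' p| / (ψ' p) ^ 2) = ∫ p in a..b, ψ'' p / (ψ' p) ^ 2 := by
        apply intervalIntegral.integral_congr_ae
        filter_upwards [hbae] with x hx hxi
        rw [abs_of_nonneg (h x (hx hxi))]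
      rw [this, hS]
      exact le_trans (le_abs_self _) hSb
    · have : (∫ p in a..b, |ψ'' p| / (ψ' p) ^ 2) = ∫ p in a..b, -(ψ'' p / (ψ' p) ^ 2) := by
        apply intervalIntegral.integral_congr_ae
        filter_upwards [hbae] with x hx hxi
        rw [abs_of_nonpos (h x (hx hxi))]; ring
      rw [this, intervalIntegral.integral_neg, hS]
      exact le_trans (neg_le_abs _) hSb
  have hT3b : ‖∫ p in a..b, T3 p‖ ≤ MV / (ω * lam) := by
    calc ‖∫ p in a..b, T3 p‖ ≤ ∫ p in a..b, ‖T3 p‖ :=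
          intervalIntegral.norm_integral_le_integral_norm hab
      _ ≤ ∫ p in a..b, (MV * ω⁻¹) * (|ψ'' p| / (ψ' p) ^ 2) := by
          apply intervalIntegral.integral_mono_on hab hT3i.norm (habs_i.const_mul _)
          intro p hp
          have h2 : ‖T3 p‖ = ‖V p‖ * |ψ'' p| / (ω * (ψ' p) ^ 2) := by
            simp only [hT3, norm_div, norm_mul, norm_pow, hE1, mul_one, hnormc,
              Complex.norm_real, Real.norm_eq_abs, sq_abs]
          rw [h2]
          have hden : 0 < ω * (ψ' p) ^ 2 := by
            have := hψ'ne p hp; positivity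
          rw [div_le_iff₀ hden]
          have h3 : MV * ω⁻¹ * (|ψ'' p| / ψ' p ^ 2) * (ω * ψ' p ^ 2) = MV * |ψ'' p| := by
            have := hψ'ne p hp
            field_simp
          rw [h3]
          exact mul_le_mul_of_nonneg_right (hMV p hp) (abs_nonneg _)
      _ ≤ MV / (ω * lam) := by
          rw [intervalIntegral.integral_const_mul]
          calc MV * ω⁻¹ * ∫ p in a..b, |ψ'' p| / (ψ' p) ^ 2
              ≤ MV * ω⁻¹ * lam⁻¹ :=
                mul_le_mul_of_nonneg_left hvar (by positivity)
            _ = MV / (ω * lam) := by rw [div_eq_mul_inv, mul_inv]; ring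
  -- conclude
  calc ‖∫ p in a..b, V p * Complex.exp (Complex.I * ω * ψ p)‖
      = ‖(G b - G a) - (∫ p in a..b, T1 p) + ∫ p in a..b, T3 p‖ := by
        rw [show (∫ p in a..b, V p * Complex.exp (Complex.I * ω * ψ p)) =
          ∫ p in a..b, V p * E p from rfl, hsplit]
      _ ≤ ‖G b‖ + ‖G a‖ + ‖∫ p in a..b, T1 p‖ + ‖∫ p in a..b, T3 p‖ := by
        calc ‖(G b - G a) - (∫ p in a..b, T1 p) + ∫ p in a..b, T3 p‖
            ≤ ‖(G b - G a) - (∫ p in a..b, T1 p)‖ + ‖∫ p in a..b, T3 p‖ := norm_add_le _ _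
          _ ≤ ‖G b - G a‖ + ‖∫ p in a..b, T1 p‖ + ‖∫ p in a..b, T3 p‖ := by
              have := norm_sub_le (G b - G a) (∫ p in a..b, T1 p); linarith
          _ ≤ ‖G b‖ + ‖G a‖ + ‖∫ p in a..b, T1 p‖ + ‖∫ p in a..b, T3 p‖ := by
              have := norm_sub_le (G b) (G a); linarith
      _ ≤ MV / (ω * lam) + MV / (ω * lam) + B / (ω * lam) + MV / (ω * lam) := by
        have h1 := hGb b ⟨hab, le_rfl⟩
        have h2 := hGb a ⟨le_rfl, hab⟩
        linarith
      _ = (3 * MV + B) / (ω * lam) := by ring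

lemma vdc_nonstat_piece
    (p₁ p₂ : ℝ) (hp : p₁ < p₂) (ρ μ : ℝ) (hρ : 1 < ρ) (hμ0 : 0 < μ) (hμ1 : μ ≤ 1)
    (I : Set ℝ) (hIopen : IsOpen I) (hIsub : Set.Icc p₁ p₂ ⊆ I)
    (p₀ : ℝ)
    (ψ : ℝ → ℝ) (ψt : ℝ → ℝ)
    (hψ : ContDiffOn ℝ 2 ψ I)
    (hfact : ∀ p ∈ I, deriv ψ p = |p - p₀| ^ (ρ - 1) * ψt p)
    (m : ℝ) (hm : 0 < m)
    (hmlb : ∀ p ∈ Set.Icc p₁ p₂, m ≤ |ψt p|)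
    (ut : ℝ → ℂ)
    (hcont : ContinuousOn ut (Set.Icc p₁ p₂))
    (hdiff : ∀ p ∈ Set.Ioo p₁ p₂, DifferentiableAt ℝ ut p)
    (hint : IntervalIntegrable (fun p => ‖deriv ut p‖) MeasureTheory.volume p₁ p₂)
    (M N : ℝ) (hM0 : 0 ≤ M) (hMb : ∀ p ∈ Set.Icc p₁ p₂, ‖ut p‖ ≤ M)
    (ω δ : ℝ) (hω : 0 < ω) (hδ : 0 < δ) (hδω : δ = ω ^ (-ρ⁻¹))
    (a b : ℝ) (ha : p₁ + δ ≤ a) (hab : a ≤ b) (hb : b ≤ p₂)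
    (hfar : ∀ p ∈ Set.Icc a b, δ ≤ |p - p₀|)
    (hmono : MonotoneOn (deriv ψ) (Set.Icc a b) ∨ AntitoneOn (deriv ψ) (Set.Icc a b))
    (hNb : (∫ p in a..b, ‖deriv ut p‖) ≤ N) (hN0 : 0 ≤ N) :
    ‖∫ p in a..b, (((p - p₁) ^ (μ - 1) : ℝ) : ℂ) * ut p * Complex.exp (Complex.I * ω * ψ p)‖
      ≤ (4 * M + N) * m⁻¹ * ω ^ (-(μ / ρ)) := by
  have hρ0 : (0:ℝ) < ρ := lt_trans one_pos hρ
  have hIab : Set.Icc a b ⊆ Set.Icc p₁ p₂ := Set.Icc_subset_Icc (by linarith) hb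
  have hIabI : Set.Icc a b ⊆ I := fun x hx => hIsub (hIab hx)
  have hsub' : ∀ p ∈ Set.Icc a b, p₁ < p := fun p hpm => by
    have := hpm.1; linarith
  -- smoothness facts
  have hψ1 : ContDiffOn ℝ 1 (deriv ψ) I := hψ.deriv_of_isOpen hIopen (by norm_num)
  have hψd : ∀ p ∈ Set.Icc a b, HasDerivAt ψ (deriv ψ p) p := by
    intro p hpm
    exact ((hψ.differentiableOn (by norm_num) p (hIabI hpm)).differentiableAt
      (hIopen.mem_nhds (hIabI hpm))).hasDerivAt
  have hψ'd : ∀ p ∈ Set.Icc a b, HasDerivAt (deriv ψ) (deriv (deriv ψ) p) p := by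
    intro p hpm
    exact ((hψ1.differentiableOn one_ne_zero p (hIabI hpm)).differentiableAt
      (hIopen.mem_nhds (hIabI hpm))).hasDerivAt
  have hψ''c : ContinuousOn (deriv (deriv ψ)) (Set.Icc a b) :=
    ((hψ1.deriv_of_isOpen hIopen (m := 0) (by norm_num)).continuousOn).mono hIabI
  set lam := m * δ ^ (ρ - 1) with hlamdef
  have hlam : 0 < lam := mul_pos hm (Real.rpow_pos_of_pos hδ _)
  have hψ'lb : ∀ p ∈ Set.Icc a b, lam ≤ |deriv ψ p| := by
    intro p hpm
    rw [hfact p (hIabI hpm), abs_mul,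
      abs_of_nonneg (Real.rpow_nonneg (abs_nonneg _) _)]
    have h1 : δ ^ (ρ - 1) ≤ |p - p₀| ^ (ρ - 1) :=
      Real.rpow_le_rpow hδ.le (hfar p hpm) (by linarith)
    have h2 : m ≤ |ψt p| := hmlb p (hIab hpm)
    calc lam = δ ^ (ρ - 1) * m := by rw [hlamdef]; ring
      _ ≤ |p - p₀| ^ (ρ - 1) * |ψt p| :=
          mul_le_mul h1 h2 hm.le (Real.rpow_nonneg (abs_nonneg _) _)
  have hsign := vdc_sign_dichotomy hab hlam (hψ1.continuousOn.mono hIabI) hψ'lb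
  have hψ''sign : (∀ p ∈ Set.Ioo a b, 0 ≤ deriv (deriv ψ) p) ∨
      ∀ p ∈ Set.Ioo a b, deriv (deriv ψ) p ≤ 0 := by
    rcases hmono with h | h
    · exact Or.inl fun p hpm =>
        vdc_deriv_nonneg_of_monotoneOn h hpm (hψ'd p (Set.mem_Icc_of_Ioo hpm))
    · exact Or.inr fun p hpm =>
        vdc_deriv_nonpos_of_antitoneOn h hpm (hψ'd p (Set.mem_Icc_of_Ioo hpm))
  -- amplitude
  set V : ℝ → ℂ := fun p => (((p - p₁) ^ (μ - 1) : ℝ) : ℂ) * ut p with hV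
  set V' : ℝ → ℂ := fun p => (((μ - 1) * (p - p₁) ^ (μ - 2) : ℝ) : ℂ) * ut p +
    (((p - p₁) ^ (μ - 1) : ℝ) : ℂ) * deriv ut p with hV'
  have hrc : ContinuousOn (fun p : ℝ => ((p - p₁) ^ (μ - 1) : ℝ)) (Set.Icc a b) :=
    (continuousOn_id.sub continuousOn_const).rpow_const
      (fun p hpm => Or.inl (ne_of_gt (by simp only [Pi.sub_apply, id_eq]; linarith [hsub' p hpm])))
  have hrc2 : ContinuousOn (fun p : ℝ => ((μ - 1) * (p - p₁) ^ (μ - 2) : ℝ)) (Set.Icc a b) :=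
    continuousOn_const.mul ((continuousOn_id.sub continuousOn_const).rpow_const
      (fun p hpm => Or.inl (ne_of_gt (by simp only [Pi.sub_apply, id_eq]; linarith [hsub' p hpm]))))
  have hVc : ContinuousOn V (Set.Icc a b) :=
    (Complex.continuous_ofReal.comp_continuousOn hrc).mul (hcont.mono hIab)
  have hVd : ∀ p ∈ Set.Ioo a b, HasDerivAt V (V' p) p := by
    intro p hpm
    have hpp : p₁ < p := hsub' p (Set.mem_Icc_of_Ioo hpm)
    have hpp2 : p < p₂ := lt_of_lt_of_le hpm.2 hb
    have h0 := Real.hasDerivAt_rpow_const (x := p - p₁) (p := μ - 1)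
      (Or.inl (ne_of_gt (by linarith)))
    have h2 := HasDerivAt.comp p h0 ((hasDerivAt_id p).sub_const p₁)
    simp only [Function.comp, mul_one] at h2
    have h2' : HasDerivAt (fun q : ℝ => (q - p₁) ^ (μ - 1))
        ((μ - 1) * (p - p₁) ^ (μ - 2)) p := by
      rw [show μ - 2 = μ - 1 - 1 by ring]
      exact h2
    exact (h2'.ofReal_comp).mul (hdiff p ⟨hpp, hpp2⟩).hasDerivAt
  have hd_int : IntervalIntegrable (deriv ut) volume p₁ p₂ := by
    rw [intervalIntegrable_iff_integrableOn_Ioc_of_le hp.le]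
    refine MeasureTheory.Integrable.mono'
      ((intervalIntegrable_iff_integrableOn_Ioc_of_le hp.le).1 hint)
      ((measurable_deriv ut).aestronglyMeasurable.restrict) ?_
    exact Filter.Eventually.of_forall fun p => le_rfl
  have huIcc : Set.uIcc a b = Set.Icc a b := Set.uIcc_of_le hab
  have hd_int' : IntervalIntegrable (deriv ut) volume a b :=
    hd_int.mono_set (by rw [huIcc, Set.uIcc_of_le hp.le]; exact hIab)
  have hn_int' : IntervalIntegrable (fun p => ‖deriv ut p‖) volume a b :=
    hint.mono_set (by rw [huIcc, Set.uIcc_of_le hp.le]; exact hIab)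
  have ht1i : IntervalIntegrable
      (fun p => (((μ - 1) * (p - p₁) ^ (μ - 2) : ℝ) : ℂ) * ut p) volume a b := by
    apply ContinuousOn.intervalIntegrable
    rw [huIcc]
    exact (Complex.continuous_ofReal.comp_continuousOn hrc2).mul (hcont.mono hIab)
  have ht2i : IntervalIntegrable
      (fun p => (((p - p₁) ^ (μ - 1) : ℝ) : ℂ) * deriv ut p) volume a b := by
    apply hd_int'.continuousOn_mul
    rw [huIcc]
    exact Complex.continuous_ofReal.comp_continuousOn hrc
  have hV'i : IntervalIntegrable V' volume a b := ht1i.add ht2i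
  -- pointwise bounds
  have hrpb : ∀ p ∈ Set.Icc a b, (p - p₁) ^ (μ - 1) ≤ δ ^ (μ - 1) := by
    intro p hpm
    apply Real.rpow_le_rpow_of_nonpos hδ (by linarith [hpm.1]) (by linarith)
  have hMVb : ∀ p ∈ Set.Icc a b, ‖V p‖ ≤ δ ^ (μ - 1) * M := by
    intro p hpm
    rw [hV]
    simp only [norm_mul, Complex.norm_real, Real.norm_eq_abs]
    rw [abs_of_nonneg (Real.rpow_nonneg (by linarith [hsub' p hpm]) _)]
    exact mul_le_mul (hrpb p hpm) (hMb p (hIab hpm)) (norm_nonneg _)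
      (Real.rpow_nonneg hδ.le _)
  -- FTC for the rpow derivative
  have hFTC2 : (∫ p in a..b, (μ - 1) * (p - p₁) ^ (μ - 2)) =
      (b - p₁) ^ (μ - 1) - (a - p₁) ^ (μ - 1) := by
    apply integral_eq_sub_of_hasDerivAt
    · intro p hpm
      rw [huIcc] at hpm
      have h0 := Real.hasDerivAt_rpow_const (x := p - p₁) (p := μ - 1)
        (Or.inl (ne_of_gt (by linarith [hsub' p hpm])))
      have h2 := HasDerivAt.comp p h0 ((hasDerivAt_id p).sub_const p₁)
      simp only [Function.comp, mul_one] at h2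
      rw [show μ - 2 = μ - 1 - 1 by ring]
      exact h2
    · apply ContinuousOn.intervalIntegrable
      rw [huIcc]
      exact hrc2
  have hBb : (∫ p in a..b, ‖V' p‖) ≤ δ ^ (μ - 1) * (M + N) := by
    have hmono1 : (∫ p in a..b, ‖V' p‖) ≤
        ∫ p in a..b, ((1 - μ) * (p - p₁) ^ (μ - 2) * M + (p - p₁) ^ (μ - 1) * ‖deriv ut p‖) := by
      apply intervalIntegral.integral_mono_on hab hV'i.norm
      · apply IntervalIntegrable.add
        · apply ContinuousOn.intervalIntegrable
          rw [huIcc]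
          exact (continuousOn_const.mul ((continuousOn_id.sub continuousOn_const).rpow_const
            (fun p hpm => Or.inl (ne_of_gt (by simp only [Pi.sub_apply, id_eq]; linarith [hsub' p hpm]))))).mul continuousOn_const
        · apply hn_int'.continuousOn_mul
          rw [huIcc]
          exact hrc
      · intro p hpm
        rw [hV']
        simp only []
        refine le_trans (norm_add_le _ _) ?_
        apply add_le_add
        · rw [norm_mul, Complex.norm_real, Real.norm_eq_abs, abs_mul,
            abs_of_nonneg (Real.rpow_nonneg (by linarith [hsub' p hpm]) _),
            abs_of_nonpos (by linarith : μ - 1 ≤ 0)]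
          have : -(μ - 1) = 1 - μ := by ring
          rw [this]
          exact mul_le_mul_of_nonneg_left (hMb p (hIab hpm))
            (mul_nonneg (by linarith) (Real.rpow_nonneg (by linarith [hsub' p hpm]) _))
        · rw [norm_mul, Complex.norm_real, Real.norm_eq_abs,
            abs_of_nonneg (Real.rpow_nonneg (by linarith [hsub' p hpm]) _)]
    have hsplit2 : (∫ p in a..b, ((1 - μ) * (p - p₁) ^ (μ - 2) * M +
        (p - p₁) ^ (μ - 1) * ‖deriv ut p‖)) =
        (∫ p in a..b, (1 - μ) * (p - p₁) ^ (μ - 2) * M) +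
        ∫ p in a..b, (p - p₁) ^ (μ - 1) * ‖deriv ut p‖ := by
      apply intervalIntegral.integral_add
      · apply ContinuousOn.intervalIntegrable
        rw [huIcc]
        exact (continuousOn_const.mul ((continuousOn_id.sub continuousOn_const).rpow_const
          (fun p hpm => Or.inl (ne_of_gt (by simp only [Pi.sub_apply, id_eq]; linarith [hsub' p hpm]))))).mul continuousOn_const
      · apply hn_int'.continuousOn_mul
        rw [huIcc]
        exact hrc
    have h1 : (∫ p in a..b, (1 - μ) * (p - p₁) ^ (μ - 2) * M) ≤ δ ^ (μ - 1) * M := by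
      have heq : (fun p : ℝ => (1 - μ) * (p - p₁) ^ (μ - 2) * M) =
          fun p : ℝ => (-M) * ((μ - 1) * (p - p₁) ^ (μ - 2)) := by
        funext p; ring
      rw [heq, intervalIntegral.integral_const_mul, hFTC2]
      have h3 : (a - p₁) ^ (μ - 1) ≤ δ ^ (μ - 1) :=
        Real.rpow_le_rpow_of_nonpos hδ (by linarith) (by linarith)
      have h4 : (0:ℝ) ≤ (b - p₁) ^ (μ - 1) := Real.rpow_nonneg (by linarith) _
      nlinarith
    have h2 : (∫ p in a..b, (p - p₁) ^ (μ - 1) * ‖deriv ut p‖) ≤ δ ^ (μ - 1) * N := by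
      have hstep : (∫ p in a..b, (p - p₁) ^ (μ - 1) * ‖deriv ut p‖) ≤
          ∫ p in a..b, δ ^ (μ - 1) * ‖deriv ut p‖ := by
        apply intervalIntegral.integral_mono_on hab
        · apply hn_int'.continuousOn_mul
          rw [huIcc]
          exact hrc
        · exact hn_int'.const_mul _
        · intro p hpm
          exact mul_le_mul_of_nonneg_right (hrpb p hpm) (norm_nonneg _)
      rw [intervalIntegral.integral_const_mul] at hstep
      calc (∫ p in a..b, (p - p₁) ^ (μ - 1) * ‖deriv ut p‖)
          ≤ δ ^ (μ - 1) * ∫ p in a..b, ‖deriv ut p‖ := hstep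
        _ ≤ δ ^ (μ - 1) * N :=
            mul_le_mul_of_nonneg_left hNb (Real.rpow_nonneg hδ.le _)
    linarith [hmono1, hsplit2 ▸ hmono1]
  -- apply the IBP bound
  have hbound := vdc_ibp_bound a b ω lam hab hω hlam ψ (deriv ψ) (deriv (deriv ψ))
    hψd hψ'd hψ''c hsign hψ''sign V V' hVc hVd hV'i (δ ^ (μ - 1) * M) (δ ^ (μ - 1) * (M + N))
    hMVb hBb
  refine le_trans hbound (le_of_eq ?_)
  have hpoweq : δ ^ (μ - 1) / (ω * δ ^ (ρ - 1)) = ω ^ (-(μ / ρ)) := by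
    rw [hδω, ← Real.rpow_mul hω.le, ← Real.rpow_mul hω.le]
    rw [show ω * ω ^ (-ρ⁻¹ * (ρ - 1)) = ω ^ (1 + -ρ⁻¹ * (ρ - 1)) from by
      rw [Real.rpow_add hω, Real.rpow_one]]
    rw [← Real.rpow_sub hω]
    congr 1
    field_simp
    try ring
  have hδρ : (0:ℝ) < δ ^ (ρ - 1) := Real.rpow_pos_of_pos hδ _
  rw [← hpoweq]
  field_simp
  try ring

theorem vdc_stationary_inside
    (p₁ p₂ : ℝ) (hp : p₁ < p₂) (ρ μ : ℝ) (hρ : 1 < ρ) (hμ : μ ∈ Set.Ioc (0:ℝ) 1)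
    (I : Set ℝ) (hIopen : IsOpen I) (hIsub : Set.Icc p₁ p₂ ⊆ I)
    (p₀ : ℝ) (hp₀ : p₀ ∈ Set.Icc p₁ p₂)
    (ψ : ℝ → ℝ) (ψt : ℝ → ℝ)
    (hψ : ContDiffOn ℝ 2 ψ I)
    (hfact : ∀ p ∈ I, deriv ψ p = |p - p₀| ^ (ρ - 1) * ψt p)
    (hψtcont : ContinuousOn (fun p => |ψt p|) I)
    (hψtne : ∀ p ∈ I, ψt p ≠ 0)
    (hmono₁ : MonotoneOn (deriv ψ) (I ∩ Set.Iic p₀) ∨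
      AntitoneOn (deriv ψ) (I ∩ Set.Iic p₀))
    (hmono₂ : MonotoneOn (deriv ψ) (I ∩ Set.Ici p₀) ∨
      AntitoneOn (deriv ψ) (I ∩ Set.Ici p₀))
    (m : ℝ) (hm : 0 < m)
    (hmin : IsLeast ((fun p => |ψt p|) '' Set.Icc p₁ p₂) m)
    (ut : ℝ → ℂ)
    (hcont : ContinuousOn ut (Set.Icc p₁ p₂))
    (hdiff : ∀ p ∈ Set.Ioo p₁ p₂, DifferentiableAt ℝ ut p)
    (hint : IntervalIntegrable (fun p => ‖deriv ut p‖) MeasureTheory.volume p₁ p₂)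
    (U : ℝ → ℂ)
    (hU : ∀ p ∈ Set.Ioc p₁ p₂, U p = (((p - p₁) ^ (μ - 1) : ℝ) : ℂ) * ut p) :
    ∀ ω : ℝ, 0 < ω →
      ‖∫ p in p₁..p₂, U p * Complex.exp (Complex.I * ω * ψ p)‖ ≤
        ((3 / μ) * (⨆ p : Set.Icc p₁ p₂, ‖ut (p : ℝ)‖) +
          (8 * (⨆ p : Set.Icc p₁ p₂, ‖ut (p : ℝ)‖) +
            2 * ∫ p in p₁..p₂, ‖deriv ut p‖) * m⁻¹) * ω ^ (-(μ / ρ)) := by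
  intro ω hω
  obtain ⟨hμ0, hμ1⟩ := hμ
  have hρ0 : (0:ℝ) < ρ := lt_trans one_pos hρ
  set M := ⨆ p : Set.Icc p₁ p₂, ‖ut (p : ℝ)‖ with hMdef
  set N := ∫ p in p₁..p₂, ‖deriv ut p‖ with hNdef
  have hMb : ∀ p ∈ Set.Icc p₁ p₂, ‖ut p‖ ≤ M := by
    intro p hpm
    have hbdd : BddAbove (Set.range fun q : Set.Icc p₁ p₂ => ‖ut (q : ℝ)‖) := by
      have h := (isCompact_Icc.image_of_continuousOn hcont.norm).bddAbove
      rwa [Set.image_eq_range] at h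
    exact le_ciSup hbdd ⟨p, hpm⟩
  have hM0 : 0 ≤ M := le_trans (norm_nonneg _) (hMb p₁ ⟨le_rfl, hp.le⟩)
  have hN0 : 0 ≤ N := intervalIntegral.integral_nonneg hp.le (fun u _ => norm_nonneg _)
  have hNsub : ∀ x y : ℝ, p₁ ≤ x → x ≤ y → y ≤ p₂ →
      (∫ p in x..y, ‖deriv ut p‖) ≤ N := fun x y h1 h2 h3 =>
    intervalIntegral.integral_mono_interval h1 h2 h3
      (Filter.Eventually.of_forall fun p => norm_nonneg _) hint
  have hmlb : ∀ p ∈ Set.Icc p₁ p₂, m ≤ |ψt p| := fun p hpm => hmin.2 ⟨p, hpm, rfl⟩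
  set δ := ω ^ (-ρ⁻¹) with hδdef
  have hδ : 0 < δ := Real.rpow_pos_of_pos hω _
  set X := ω ^ (-(μ / ρ)) with hXdef
  have hX0 : 0 ≤ X := Real.rpow_nonneg hω.le _
  have hδμX : δ ^ μ = X := by
    rw [hδdef, hXdef, ← Real.rpow_mul hω.le]
    congr 1
    rw [neg_mul, inv_mul_eq_div]
  -- norm of exponential
  have hE1 : ∀ p : ℝ, ‖Complex.exp (Complex.I * ω * ψ p)‖ = 1 := by
    intro p
    have h : Complex.I * (ω:ℂ) * (ψ p : ℂ) = ((ω * ψ p : ℝ) : ℂ) * Complex.I := by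
      push_cast; ring
    rw [h, Complex.norm_exp_ofReal_mul_I]
  -- integrability of the full integrand
  have hψc : ContinuousOn ψ (Set.Icc p₁ p₂) := hψ.continuousOn.mono hIsub
  have hrpow_int : IntervalIntegrable (fun p : ℝ => (p - p₁) ^ (μ - 1)) volume p₁ p₂ := by
    have h0 := intervalIntegral.intervalIntegrable_rpow'
      (show (-1:ℝ) < μ - 1 by linarith) (a := p₁ - p₁) (b := p₂ - p₁)
    have h1 := h0.comp_sub_right p₁
    simpa using h1
  have hVEc : ContinuousOn
      (fun p => (((p - p₁) ^ (μ - 1) : ℝ) : ℂ) * ut p * Complex.exp (Complex.I * ω * ψ p))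
      (Set.Ioc p₁ p₂) := by
    apply ContinuousOn.mul
    · apply ContinuousOn.mul
      · apply Complex.continuous_ofReal.comp_continuousOn
        apply (continuousOn_id.sub continuousOn_const).rpow_const
        intro p hpm
        exact Or.inl (ne_of_gt (by simp only [Pi.sub_apply, id_eq]; linarith [hpm.1]))
      · exact hcont.mono Set.Ioc_subset_Icc_self
    · apply Complex.continuous_exp.comp_continuousOn
      exact continuousOn_const.mul
        (Complex.continuous_ofReal.comp_continuousOn (hψc.mono Set.Ioc_subset_Icc_self))
  have hVE : IntervalIntegrable
      (fun p => (((p - p₁) ^ (μ - 1) : ℝ) : ℂ) * ut p * Complex.exp (Complex.I * ω * ψ p))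
      volume p₁ p₂ := by
    rw [intervalIntegrable_iff_integrableOn_Ioc_of_le hp.le]
    refine MeasureTheory.Integrable.mono' (g := fun p => M * (p - p₁) ^ (μ - 1))
      ((intervalIntegrable_iff_integrableOn_Ioc_of_le hp.le).1 (hrpow_int.const_mul M))
      (hVEc.aestronglyMeasurable measurableSet_Ioc) ?_
    rw [MeasureTheory.ae_restrict_iff' measurableSet_Ioc]
    refine Filter.Eventually.of_forall fun p hpm => ?_
    show ‖(((p - p₁) ^ (μ - 1) : ℝ) : ℂ) * ut p * Complex.exp (Complex.I * ω * ψ p)‖ ≤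
      M * (p - p₁) ^ (μ - 1)
    rw [norm_mul, norm_mul, hE1, mul_one, Complex.norm_real, Real.norm_eq_abs,
      abs_of_nonneg (Real.rpow_nonneg (by linarith [hpm.1]) _), mul_comm M]
    exact mul_le_mul_of_nonneg_left (hMb p (Set.Ioc_subset_Icc_self hpm))
      (Real.rpow_nonneg (by linarith [hpm.1]) _)
  have hcongr : (∫ p in p₁..p₂, U p * Complex.exp (Complex.I * ω * ψ p)) =
      ∫ p in p₁..p₂,
        (((p - p₁) ^ (μ - 1) : ℝ) : ℂ) * ut p * Complex.exp (Complex.I * ω * ψ p) := by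
    apply intervalIntegral.integral_congr_ae
    refine Filter.Eventually.of_forall fun p hpm => ?_
    rw [Set.uIoc_of_le hp.le] at hpm
    rw [hU p hpm]
  -- the cut points
  set q₁ := min p₂ (p₁ + δ) with hq₁def
  set q₂ := max q₁ (p₀ - δ) with hq₂def
  set q₃ := max q₂ (min p₂ (p₀ + δ)) with hq₃def
  have hq₁p₁ : p₁ ≤ q₁ := le_min hp.le (by linarith)
  have hq₁p₂ : q₁ ≤ p₂ := min_le_left _ _
  have hq₁₂ : q₁ ≤ q₂ := le_max_left _ _
  have hq₂p₂ : q₂ ≤ p₂ := max_le hq₁p₂ (by linarith [hp₀.2])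
  have hq₂₃ : q₂ ≤ q₃ := le_max_left _ _
  have hq₃p₂ : q₃ ≤ p₂ := max_le hq₂p₂ (min_le_left _ _)
  have hq₁δ : q₁ - p₁ ≤ δ := by
    have := min_le_right p₂ (p₁ + δ); linarith
  have hq₂ge : p₀ - δ ≤ q₂ := le_max_right _ _
  have hsub : ∀ x y : ℝ, p₁ ≤ x → x ≤ y → y ≤ p₂ → IntervalIntegrable
      (fun p => (((p - p₁) ^ (μ - 1) : ℝ) : ℂ) * ut p * Complex.exp (Complex.I * ω * ψ p))
      volume x y := by
    intro x y h1 h2 h3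
    apply hVE.mono_set
    rw [Set.uIcc_of_le hp.le]
    exact Set.uIcc_subset_Icc ⟨h1, le_trans h2 h3⟩ ⟨le_trans h1 h2, h3⟩
  have hsplit : (∫ p in p₁..p₂,
        (((p - p₁) ^ (μ - 1) : ℝ) : ℂ) * ut p * Complex.exp (Complex.I * ω * ψ p)) =
      (∫ p in p₁..q₁,
        (((p - p₁) ^ (μ - 1) : ℝ) : ℂ) * ut p * Complex.exp (Complex.I * ω * ψ p)) +
      (∫ p in q₁..q₂,
        (((p - p₁) ^ (μ - 1) : ℝ) : ℂ) * ut p * Complex.exp (Complex.I * ω * ψ p)) +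
      (∫ p in q₂..q₃,
        (((p - p₁) ^ (μ - 1) : ℝ) : ℂ) * ut p * Complex.exp (Complex.I * ω * ψ p)) +
      ∫ p in q₃..p₂,
        (((p - p₁) ^ (μ - 1) : ℝ) : ℂ) * ut p * Complex.exp (Complex.I * ω * ψ p) := by
    have e1 := intervalIntegral.integral_add_adjacent_intervals
      (hsub p₁ q₁ le_rfl hq₁p₁ hq₁p₂) (hsub q₁ q₂ hq₁p₁ hq₁₂ hq₂p₂)
    have e2 := intervalIntegral.integral_add_adjacent_intervals
      (hsub p₁ q₂ le_rfl (le_trans hq₁p₁ hq₁₂) hq₂p₂) (hsub q₂ q₃ (le_trans hq₁p₁ hq₁₂) hq₂₃ hq₃p₂)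
    have e3 := intervalIntegral.integral_add_adjacent_intervals
      (hsub p₁ q₃ le_rfl (le_trans (le_trans hq₁p₁ hq₁₂) hq₂₃) hq₃p₂) (hsub q₃ p₂ (le_trans (le_trans hq₁p₁ hq₁₂) hq₂₃) hq₃p₂ le_rfl)
    rw [← e3, ← e2, ← e1]
  -- Region 1 bound
  have hB1 : ‖∫ p in p₁..q₁,
      (((p - p₁) ^ (μ - 1) : ℝ) : ℂ) * ut p * Complex.exp (Complex.I * ω * ψ p)‖ ≤
      M * (δ ^ μ / μ) := by
    calc ‖∫ p in p₁..q₁,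
        (((p - p₁) ^ (μ - 1) : ℝ) : ℂ) * ut p * Complex.exp (Complex.I * ω * ψ p)‖
        ≤ ∫ p in p₁..q₁,
          ‖(((p - p₁) ^ (μ - 1) : ℝ) : ℂ) * ut p * Complex.exp (Complex.I * ω * ψ p)‖ :=
          intervalIntegral.norm_integral_le_integral_norm hq₁p₁
      _ ≤ ∫ p in p₁..q₁, M * (p - p₁) ^ (μ - 1) := by
          apply intervalIntegral.integral_mono_on hq₁p₁
            (hsub p₁ q₁ le_rfl hq₁p₁ hq₁p₂).norm
            ((hrpow_int.const_mul M).mono_set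
              (by rw [Set.uIcc_of_le hp.le, Set.uIcc_of_le hq₁p₁]
                  exact Set.Icc_subset_Icc le_rfl hq₁p₂))
          intro p hpm
          rw [norm_mul, norm_mul, hE1, mul_one, Complex.norm_real, Real.norm_eq_abs,
            abs_of_nonneg (Real.rpow_nonneg (by linarith [hpm.1]) _), mul_comm M]
          exact mul_le_mul_of_nonneg_left
            (hMb p ⟨hpm.1, le_trans hpm.2 hq₁p₂⟩)
            (Real.rpow_nonneg (by linarith [hpm.1]) _)
      _ = M * ((q₁ - p₁) ^ μ / μ) := by
          rw [intervalIntegral.integral_const_mul]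
          congr 1
          have h1 : (∫ p in p₁..q₁, (p - p₁) ^ (μ - 1)) =
              ∫ x in (p₁ - p₁)..(q₁ - p₁), x ^ (μ - 1) :=
            intervalIntegral.integral_comp_sub_right (fun x => x ^ (μ - 1)) p₁
          rw [h1, sub_self, integral_rpow (Or.inl (by linarith : (-1:ℝ) < μ - 1))]
          rw [show μ - 1 + 1 = μ by ring, Real.zero_rpow (by linarith : μ ≠ 0)]
          ring
      _ ≤ M * (δ ^ μ / μ) := by
          have h : (q₁ - p₁) ^ μ ≤ δ ^ μ := Real.rpow_le_rpow (by linarith) hq₁δ hμ0.le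
          have hMμ : 0 ≤ M / μ := by positivity
          calc M * ((q₁ - p₁) ^ μ / μ) = (q₁ - p₁) ^ μ * (M / μ) := by ring
            _ ≤ δ ^ μ * (M / μ) := mul_le_mul_of_nonneg_right h hMμ
            _ = M * (δ ^ μ / μ) := by ring
  -- Region 3 (stationary) bound
  have hδμsplit : δ ^ (μ - 1) * δ = δ ^ μ := by
    rw [← Real.rpow_add_one hδ.ne' (μ - 1), show μ - 1 + 1 = μ by ring]
  have hB3 : ‖∫ p in q₂..q₃,
      (((p - p₁) ^ (μ - 1) : ℝ) : ℂ) * ut p * Complex.exp (Complex.I * ω * ψ p)‖ ≤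
      2 * (M * δ ^ μ) := by
    rcases eq_or_lt_of_le hq₂₃ with heq | hlt
    · rw [← heq, intervalIntegral.integral_same, norm_zero]
      positivity
    · have hq₁eq : q₁ = p₁ + δ := by
        rcases le_total (p₁ + δ) p₂ with h | h
        · rw [hq₁def]; exact min_eq_right h
        · exfalso
          have h1 : q₁ = p₂ := by rw [hq₁def]; exact min_eq_left h
          have h2 : q₂ = p₂ := le_antisymm hq₂p₂ (h1 ▸ hq₁₂)
          have h3 : q₃ = p₂ := le_antisymm hq₃p₂ (h2 ▸ hq₂₃)
          rw [h2, h3] at hlt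
          exact lt_irrefl _ hlt
      have hq₂lb : p₁ + δ ≤ q₂ := hq₁eq ▸ hq₁₂
      have h2δ : q₃ - q₂ ≤ 2 * δ := by
        have hle : q₃ ≤ max q₂ (p₀ + δ) :=
          max_le (le_max_left _ _) (le_trans (min_le_right _ _) (le_max_right _ _))
        rcases le_total q₂ (p₀ + δ) with h | h
        · rw [max_eq_right h] at hle; linarith
        · rw [max_eq_left h] at hle; linarith
      calc ‖∫ p in q₂..q₃,
          (((p - p₁) ^ (μ - 1) : ℝ) : ℂ) * ut p * Complex.exp (Complex.I * ω * ψ p)‖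
          ≤ ∫ p in q₂..q₃,
            ‖(((p - p₁) ^ (μ - 1) : ℝ) : ℂ) * ut p * Complex.exp (Complex.I * ω * ψ p)‖ :=
            intervalIntegral.norm_integral_le_integral_norm hq₂₃
        _ ≤ ∫ _p in q₂..q₃, δ ^ (μ - 1) * M := by
            apply intervalIntegral.integral_mono_on hq₂₃
              (hsub q₂ q₃ (by linarith) hq₂₃ hq₃p₂).norm intervalIntegrable_const
            intro p hpm
            rw [norm_mul, norm_mul, hE1, mul_one, Complex.norm_real, Real.norm_eq_abs,
              abs_of_nonneg (Real.rpow_nonneg (by linarith [hpm.1]) _)]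
            apply mul_le_mul
            · exact Real.rpow_le_rpow_of_nonpos hδ (by linarith [hpm.1]) (by linarith)
            · exact hMb p ⟨by linarith [hpm.1], le_trans hpm.2 hq₃p₂⟩
            · exact norm_nonneg _
            · exact Real.rpow_nonneg hδ.le _
        _ = (q₃ - q₂) * (δ ^ (μ - 1) * M) := by
            rw [intervalIntegral.integral_const, smul_eq_mul]
        _ ≤ 2 * (M * δ ^ μ) := by
            have h1 : (q₃ - q₂) * (δ ^ (μ - 1) * M) ≤ 2 * δ * (δ ^ (μ - 1) * M) := by
              apply mul_le_mul_of_nonneg_right h2δ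
              positivity
            calc (q₃ - q₂) * (δ ^ (μ - 1) * M) ≤ 2 * δ * (δ ^ (μ - 1) * M) := h1
              _ = 2 * (M * (δ ^ (μ - 1) * δ)) := by ring
              _ = 2 * (M * δ ^ μ) := by rw [hδμsplit]
  -- Nonstationary bounds
  have hK0 : 0 ≤ (4 * M + N) * m⁻¹ * X := by positivity
  have hB2 : ‖∫ p in q₁..q₂,
      (((p - p₁) ^ (μ - 1) : ℝ) : ℂ) * ut p * Complex.exp (Complex.I * ω * ψ p)‖ ≤
      (4 * M + N) * m⁻¹ * X := by
    rcases eq_or_lt_of_le hq₁₂ with heq | hlt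
    · rw [← heq, intervalIntegral.integral_same, norm_zero]
      exact hK0
    · have hq₂eq : q₂ = p₀ - δ := by
        rcases le_total (p₀ - δ) q₁ with h | h
        · exfalso
          have : q₂ = q₁ := by rw [hq₂def]; exact max_eq_left h
          rw [this] at hlt; exact lt_irrefl _ hlt
        · rw [hq₂def]; exact max_eq_right h
      have hq₁eq : q₁ = p₁ + δ := by
        rcases le_total (p₁ + δ) p₂ with h | h
        · rw [hq₁def]; exact min_eq_right h
        · exfalso
          have h1 : q₁ = p₂ := by rw [hq₁def]; exact min_eq_left h
          have h2 : q₂ = p₂ := le_antisymm hq₂p₂ (h1 ▸ hq₁₂)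
          rw [h1, h2] at hlt
          exact lt_irrefl _ hlt
      rw [hXdef]
      apply vdc_nonstat_piece p₁ p₂ hp ρ μ hρ hμ0 hμ1 I hIopen hIsub p₀ ψ ψt hψ hfact
        m hm hmlb ut hcont hdiff hint M N hM0 hMb ω δ hω hδ hδdef
        q₁ q₂ (le_of_eq hq₁eq.symm) hlt.le hq₂p₂
      · intro p hpm
        rw [abs_of_nonpos (by rw [hq₂eq] at hpm; linarith [hpm.2, hδ] : p - p₀ ≤ 0)]
        rw [hq₂eq] at hpm
        linarith [hpm.2]
      · have hss : Set.Icc q₁ q₂ ⊆ I ∩ Set.Iic p₀ := by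
          intro x hx
          refine ⟨hIsub ⟨by linarith [hx.1, hq₁eq], le_trans hx.2 hq₂p₂⟩, ?_⟩
          rw [Set.mem_Iic]
          rw [hq₂eq] at hx
          linarith [hx.2, hδ.le]
        rcases hmono₁ with h | h
        · exact Or.inl (h.mono hss)
        · exact Or.inr (h.mono hss)
      · exact hNsub q₁ q₂ hq₁p₁ hlt.le hq₂p₂
      · exact hN0
  have hB4 : ‖∫ p in q₃..p₂,
      (((p - p₁) ^ (μ - 1) : ℝ) : ℂ) * ut p * Complex.exp (Complex.I * ω * ψ p)‖ ≤
      (4 * M + N) * m⁻¹ * X := by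
    rcases eq_or_lt_of_le hq₃p₂ with heq | hlt
    · rw [heq, intervalIntegral.integral_same, norm_zero]
      exact hK0
    · have hq₁eq : q₁ = p₁ + δ := by
        rcases le_total (p₁ + δ) p₂ with h | h
        · rw [hq₁def]; exact min_eq_right h
        · exfalso
          have h1 : q₁ = p₂ := by rw [hq₁def]; exact min_eq_left h
          have : p₂ ≤ q₃ := h1 ▸ le_trans hq₁₂ hq₂₃
          linarith [hlt]
      have hq₃ge : p₀ + δ ≤ q₃ := by
        rcases le_total p₂ (p₀ + δ) with h | h
        · exfalso
          have h1 : min p₂ (p₀ + δ) = p₂ := min_eq_left h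
          have : q₃ = p₂ := le_antisymm hq₃p₂ (by rw [hq₃def, h1]; exact le_max_right _ _)
          rw [this] at hlt; exact lt_irrefl _ hlt
        · have h1 : min p₂ (p₀ + δ) = p₀ + δ := min_eq_right h
          rw [hq₃def, h1]; exact le_max_right _ _
      rw [hXdef]
      apply vdc_nonstat_piece p₁ p₂ hp ρ μ hρ hμ0 hμ1 I hIopen hIsub p₀ ψ ψt hψ hfact
        m hm hmlb ut hcont hdiff hint M N hM0 hMb ω δ hω hδ hδdef
        q₃ p₂ (by linarith [le_trans hq₁₂ hq₂₃, hq₁eq]) hlt.le le_rfl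
      · intro p hpm
        rw [abs_of_nonneg (by linarith [hpm.1, hδ.le] : 0 ≤ p - p₀)]
        linarith [hpm.1]
      · have hss : Set.Icc q₃ p₂ ⊆ I ∩ Set.Ici p₀ := by
          intro x hx
          refine ⟨hIsub ⟨by linarith [hx.1, hq₁eq, le_trans hq₁₂ hq₂₃, hδ.le], hx.2⟩, ?_⟩
          rw [Set.mem_Ici]
          linarith [hx.1, hδ.le]
        rcases hmono₂ with h | h
        · exact Or.inl (h.mono hss)
        · exact Or.inr (h.mono hss)
      · exact hNsub q₃ p₂ (le_trans hq₁p₁ (le_trans hq₁₂ hq₂₃)) hlt.le le_rfl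
      · exact hN0
  -- assemble
  rw [hcongr, hsplit]
  have htri : ∀ A B C D : ℂ, ‖A + B + C + D‖ ≤ ‖A‖ + ‖B‖ + ‖C‖ + ‖D‖ := by
    intro A B C D
    calc ‖A + B + C + D‖ ≤ ‖A + B + C‖ + ‖D‖ := norm_add_le _ _
      _ ≤ ‖A + B‖ + ‖C‖ + ‖D‖ := by linarith [norm_add_le (A + B) C]
      _ ≤ ‖A‖ + ‖B‖ + ‖C‖ + ‖D‖ := by linarith [norm_add_le A B]
  refine le_trans (htri _ _ _ _) ?_
  have h2μ : 2 * (M * X) ≤ 2 / μ * (M * X) := by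
    apply mul_le_mul_of_nonneg_right _ (mul_nonneg hM0 hX0)
    rw [le_div_iff₀ hμ0]
    linarith
  have hMXδ : M * (δ ^ μ / μ) = M * X / μ := by rw [hδμX]; ring
  have hrhs : ((3 / μ) * M + (8 * M + 2 * N) * m⁻¹) * X =
      M * X / μ + 2 / μ * (M * X) + 2 * ((4 * M + N) * m⁻¹ * X) := by
    field_simp
    ring
  calc ‖∫ p in p₁..q₁,
      (((p - p₁) ^ (μ - 1) : ℝ) : ℂ) * ut p * Complex.exp (Complex.I * ω * ψ p)‖ +
      ‖∫ p in q₁..q₂,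
      (((p - p₁) ^ (μ - 1) : ℝ) : ℂ) * ut p * Complex.exp (Complex.I * ω * ψ p)‖ +
      ‖∫ p in q₂..q₃,
      (((p - p₁) ^ (μ - 1) : ℝ) : ℂ) * ut p * Complex.exp (Complex.I * ω * ψ p)‖ +
      ‖∫ p in q₃..p₂,
      (((p - p₁) ^ (μ - 1) : ℝ) : ℂ) * ut p * Complex.exp (Complex.I * ω * ψ p)‖
      ≤ M * (δ ^ μ / μ) + (4 * M + N) * m⁻¹ * X + 2 * (M * δ ^ μ) +
        (4 * M + N) * m⁻¹ * X := by
        linarith [hB1, hB2, hB3, hB4]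
    _ ≤ ((3 / μ) * M + (8 * M + 2 * N) * m⁻¹) * X := by
        rw [hrhs, hMXδ]
        have : 2 * (M * δ ^ μ) = 2 * (M * X) := by rw [hδμX]
        rw [this]
        linarith [h2μ]
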